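/- Let X be a nonnegative random variable with cumulative distribution function F and finite mean E[X] = ∫₀^∞ (1 − F(x)) dx. Then the sum of the cumulative residual entropy and the cumulative entropy of X equals 𝓔(X) + 𝓒𝓔(X) = Σ_{n=1}^∞ (μ_{n+1:n+1} − μ_{1:n+1})/(n(n+1)), where both sides are equal as values in [0, ∞]. -/

import Mathlib

open MeasureTheory ProbabilityTheory Set
open scoped ENNReal

open Filter in
lemma CRE.hasSum_telescope : HasSum (fun n : ℕ => (1:ℝ)/((n:ℝ)+1) - 1/((n:ℝ)+2)) 1 := by
  have hnn : ∀ n : ℕ, 0 ≤ (1:ℝ)/((n:ℝ)+1) - 1/((n:ℝ)+2) := by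
    intro n
    have : (1:ℝ)/((n:ℝ)+2) ≤ 1/((n:ℝ)+1) := by
      apply one_div_le_one_div_of_le
      · positivity
      · linarith
    linarith
  rw [hasSum_iff_tendsto_nat_of_nonneg hnn]
  have hps : ∀ N : ℕ, ∑ i ∈ Finset.range N, ((1:ℝ)/((i:ℝ)+1) - 1/((i:ℝ)+2))
      = 1 - 1/((N:ℝ)+1) := by
    intro N
    have h2 : ∀ i ∈ Finset.range N, (1:ℝ)/((i:ℝ)+1) - 1/((i:ℝ)+2)
        = (fun i : ℕ => (1:ℝ)/((i:ℝ)+1)) i - (fun i : ℕ => (1:ℝ)/((i:ℝ)+1)) (i+1) := by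
      intro i _; push_cast; ring_nf
    rw [Finset.sum_congr rfl h2, Finset.sum_range_sub' (fun i : ℕ => (1:ℝ)/((i:ℝ)+1)) N]
    norm_num
  simp only [hps]
  have := tendsto_one_div_add_atTop_nhds_zero_nat (𝕜 := ℝ)
  simpa using tendsto_const_nhds.sub this

lemma CRE.hasSum_single (p : ℝ) (h0 : 0 ≤ p) (h1 : p ≤ 1) :
    HasSum (fun n : ℕ => (p - p ^ (n+2)) / (((n:ℝ)+1)*((n:ℝ)+2)))
      (-((1-p) * Real.log (1-p))) := by
  rcases eq_or_lt_of_le h1 with rfl | hlt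
  · simpa using hasSum_zero
  have habs : |p| < 1 := abs_lt.2 ⟨by linarith, hlt⟩
  have h := Real.hasSum_pow_div_log_of_abs_lt_one habs
  have hb : HasSum (fun n : ℕ => p ^ (n+2) / ((n:ℝ)+1)) (p * -Real.log (1-p)) := by
    have h' := h.mul_left p
    have hfun : (fun n : ℕ => p * (p ^ (n+1) / ((n:ℝ)+1)))
        = fun n : ℕ => p ^ (n+2) / ((n:ℝ)+1) := funext fun n => by ring
    rwa [hfun] at h'
  have hc : HasSum (fun n : ℕ => p ^ (n+2) / ((n:ℝ)+2)) (-Real.log (1-p) - p) := by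
    have h' := (hasSum_nat_add_iff' (f := fun n : ℕ => p ^ (n+1) / ((n:ℝ)+1)) 1).2 h
    have hfun : (fun n : ℕ => p ^ ((n+1)+1) / ((((n+1):ℕ):ℝ)+1))
        = fun n : ℕ => p ^ (n+2) / ((n:ℝ)+2) := funext fun n => by push_cast; ring_nf
    simp only [hfun] at h'
    convert h' using 1
    · rfl
    simp
  have ha : HasSum (fun n : ℕ => p * ((1:ℝ)/((n:ℝ)+1) - 1/((n:ℝ)+2))) p := by
    simpa using CRE.hasSum_telescope.mul_left p
  have hcomb := (ha.sub hb).add hc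
  have hfun : (fun b : ℕ => p * (1/((b:ℝ)+1) - 1/((b:ℝ)+2)) - p ^ (b+2) / ((b:ℝ)+1)
        + p ^ (b+2) / ((b:ℝ)+2))
      = fun n : ℕ => (p - p ^ (n+2)) / (((n:ℝ)+1)*((n:ℝ)+2)) := by
    funext n
    have h1 : ((n:ℝ)+1) ≠ 0 := by positivity
    have h2 : ((n:ℝ)+2) ≠ 0 := by positivity
    field_simp
    ring
  rw [hfun] at hcomb
  convert hcomb using 1
  · rfl
  ring

lemma CRE.hasSum_both (q : ℝ) (h0 : 0 ≤ q) (h1 : q ≤ 1) :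
    HasSum (fun n : ℕ => (1 - q ^ (n+2) - (1-q) ^ (n+2)) / (((n:ℝ)+1)*((n:ℝ)+2)))
      (-((1-q) * Real.log (1-q)) + -(q * Real.log q)) := by
  have h₁ := CRE.hasSum_single q h0 h1
  have h₂ := CRE.hasSum_single (1-q) (by linarith) (by linarith)
  have h3 := h₁.add h₂
  have hfun : (fun n : ℕ => (q - q ^ (n+2)) / (((n:ℝ)+1)*((n:ℝ)+2))
        + ((1-q) - (1-q) ^ (n+2)) / (((n:ℝ)+1)*((n:ℝ)+2)))
      = fun n : ℕ => (1 - q ^ (n+2) - (1-q) ^ (n+2)) / (((n:ℝ)+1)*((n:ℝ)+2)) := by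
    funext n
    rw [← add_div]
    ring_nf
  rw [hfun, sub_sub_cancel] at h3
  exact h3

/-- For a nonnegative random variable with cdf `F = cdf μ` and finite mean
`E[X] = ∫₀^∞ (1 - F x) dx`, the sum of the cumulative residual entropy
`𝓔(X) = ∫₀^∞ -(1 - F x) log (1 - F x) dx` and the cumulative entropy
`𝓒𝓔(X) = ∫₀^∞ -(F x) log (F x) dx` equals
`∑_{n=1}^∞ (μ_{n+1:n+1} - μ_{1:n+1}) / (n (n+1))` as values in `[0, ∞]`, where
`μ_{m:m} = ∫₀^∞ (1 - (F x)^m) dx` and `μ_{1:m} = ∫₀^∞ (1 - F x)^m dx`. -/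
theorem cre_add_ce_eq_tsum_order_stats_diff
    (μ : Measure ℝ) [IsProbabilityMeasure μ] (hnonneg : μ (Set.Iio 0) = 0)
    (hmean : ∫⁻ x in Set.Ioi (0 : ℝ), ENNReal.ofReal (1 - cdf μ x) ≠ ⊤) :
    (∫⁻ x in Set.Ioi (0 : ℝ),
        ENNReal.ofReal (-((1 - cdf μ x) * Real.log (1 - cdf μ x))))
      + ∫⁻ x in Set.Ioi (0 : ℝ),
          ENNReal.ofReal (-(cdf μ x * Real.log (cdf μ x)))
    = ∑' n : ℕ,
        ((∫⁻ x in Set.Ioi (0 : ℝ), ENNReal.ofReal (1 - (cdf μ x) ^ (n + 2)))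
            - ∫⁻ x in Set.Ioi (0 : ℝ), ENNReal.ofReal ((1 - cdf μ x) ^ (n + 2)))
          / (((n : ℝ≥0∞) + 1) * ((n : ℝ≥0∞) + 2)) := by
  set F := cdf μ with hFdef
  have hF : Measurable F := (monotone_cdf (μ := μ)).measurable
  have h0 : ∀ x, 0 ≤ F x := fun x => cdf_nonneg μ x
  have h1 : ∀ x, F x ≤ 1 := fun x => cdf_le_one μ x
  -- denominator as ENNReal
  set c : ℕ → ℝ≥0∞ := fun n => ((n : ℝ≥0∞) + 1) * ((n : ℝ≥0∞) + 2) with hcdef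
  have hc_ofReal : ∀ n : ℕ, ENNReal.ofReal (((n:ℝ)+1)*((n:ℝ)+2)) = c n := by
    intro n
    rw [show ((n:ℝ)+1) = ((n+1:ℕ):ℝ) by push_cast; ring,
      show ((n:ℝ)+2) = ((n+2:ℕ):ℝ) by push_cast; ring,
      ENNReal.ofReal_mul (by positivity), ENNReal.ofReal_natCast, ENNReal.ofReal_natCast]
    push_cast
    ring
  have hc_ne_top : ∀ n, (c n)⁻¹ ≠ ⊤ := by
    intro n
    simp [hcdef, ENNReal.inv_eq_top]
  -- pointwise numerator bounds
  have hpow_le : ∀ (n : ℕ) (x : ℝ), (1 - F x) ^ (n+2) ≤ 1 - (F x) ^ (n+2) := by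
    intro n x
    have hq1 : (F x) ^ (n+2) ≤ F x := pow_le_of_le_one (h0 x) (h1 x) (by omega)
    have hq2 : (1 - F x) ^ (n+2) ≤ 1 - F x :=
      pow_le_of_le_one (by linarith [h1 x]) (by linarith [h0 x]) (by omega)
    linarith
  -- pointwise identity
  have hpt : ∀ x : ℝ,
      ENNReal.ofReal (-((1 - F x) * Real.log (1 - F x)))
        + ENNReal.ofReal (-(F x * Real.log (F x)))
      = ∑' n : ℕ, ENNReal.ofReal (1 - (F x) ^ (n+2) - (1 - F x) ^ (n+2)) / c n := by
    intro x
    have hs := CRE.hasSum_both (F x) (h0 x) (h1 x)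
    have hA : 0 ≤ -((1 - F x) * Real.log (1 - F x)) := by
      have := Real.log_nonpos (x := 1 - F x) (by linarith [h1 x]) (by linarith [h0 x])
      nlinarith [h1 x, h0 x]
    have hB : 0 ≤ -(F x * Real.log (F x)) := by
      have := Real.log_nonpos (x := F x) (h0 x) (h1 x)
      nlinarith [h0 x]
    have htn : ∀ n : ℕ,
        0 ≤ (1 - (F x) ^ (n+2) - (1 - F x) ^ (n+2)) / (((n:ℝ)+1)*((n:ℝ)+2)) := by
      intro n
      have := hpow_le n x
      have hnum : 0 ≤ 1 - (F x) ^ (n+2) - (1 - F x) ^ (n+2) := by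
        have := pow_nonneg (show (0:ℝ) ≤ 1 - F x by linarith [h1 x]) (n+2)
        linarith
      exact div_nonneg hnum (by positivity)
    rw [← ENNReal.ofReal_add hA hB, ← hs.tsum_eq,
      ENNReal.ofReal_tsum_of_nonneg htn hs.summable]
    refine tsum_congr fun n => ?_
    rw [ENNReal.ofReal_div_of_pos (by positivity), hc_ofReal]
  -- measurability of summands
  have hmeas : ∀ n : ℕ, Measurable fun x =>
      ENNReal.ofReal (1 - (F x) ^ (n+2) - (1 - F x) ^ (n+2)) / c n := by
    intro n
    exact (((measurable_const.sub (hF.pow_const _)).sub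
      ((measurable_const.sub hF).pow_const _)).ennreal_ofReal).div_const _
  have hmeas1 : Measurable fun x =>
      ENNReal.ofReal (-((1 - F x) * Real.log (1 - F x))) := by
    exact (((measurable_const.sub hF).mul
      ((measurable_const.sub hF).log)).neg).ennreal_ofReal
  rw [← lintegral_add_left hmeas1, lintegral_congr hpt,
    lintegral_tsum fun n => (hmeas n).aemeasurable]
  refine tsum_congr fun n => ?_
  -- per-n computation
  have hstep : (∫⁻ x in Set.Ioi (0:ℝ),
      ENNReal.ofReal (1 - (F x) ^ (n+2) - (1 - F x) ^ (n+2)) / c n)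
      = (∫⁻ x in Set.Ioi (0:ℝ),
        ENNReal.ofReal (1 - (F x) ^ (n+2) - (1 - F x) ^ (n+2))) / c n := by
    simp_rw [div_eq_mul_inv]
    exact lintegral_mul_const' _ _ (hc_ne_top n)
  rw [hstep]
  congr 1
  have hsub : ∀ x : ℝ, ENNReal.ofReal (1 - (F x) ^ (n+2) - (1 - F x) ^ (n+2))
      = ENNReal.ofReal (1 - (F x) ^ (n+2)) - ENNReal.ofReal ((1 - F x) ^ (n+2)) := by
    intro x
    exact ENNReal.ofReal_sub _ (pow_nonneg (by linarith [h1 x]) _)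
  have hg_fin : (∫⁻ x in Set.Ioi (0:ℝ), ENNReal.ofReal ((1 - F x) ^ (n+2))) ≠ ⊤ := by
    refine ne_top_of_le_ne_top hmean (lintegral_mono fun x => ?_)
    exact ENNReal.ofReal_le_ofReal
      (pow_le_of_le_one (by linarith [h1 x]) (by linarith [h0 x]) (by omega))
  have hg_meas : Measurable fun x => ENNReal.ofReal ((1 - F x) ^ (n+2)) :=
    ((measurable_const.sub hF).pow_const _).ennreal_ofReal
  rw [lintegral_congr hsub]
  exact lintegral_sub hg_meas hg_fin
    (Filter.Eventually.of_forall fun x =>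
      ENNReal.ofReal_le_ofReal (hpow_le n x))
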